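/- Let p > 2, p′ = p/(p−1), a > 0 and 0 ≤ b ≤ p − 1, and let h be the Legendre transform of f(s,t) = (a/p)(|s|^p + 2b|s|^{p/2}|t|^{p/2} + |t|^p). Then for every real s̄ one has h(s̄, 0) = (a^{1−p′}/p′) |s̄|^{p′}. -/

import Mathlib

/-- the Legendre transform `h` of `f` satisfies
`h(s̄, 0) = (a^(1-p')/p') |s̄|^(p')` for every real `s̄`. -/
theorem stmt_9 (p p' a b : ℝ) (hp : 2 < p) (hp' : p' = p / (p - 1)) (ha : 0 < a)
    (hb0 : 0 ≤ b) (hb1 : b ≤ p - 1)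
    (h : ℝ → ℝ → ℝ)
    (hh : ∀ sb tb : ℝ, h sb tb = ⨆ st : ℝ × ℝ,
      (st.1 * sb + st.2 * tb -
        (a / p) * (|st.1| ^ p + 2 * b * |st.1| ^ (p / 2) * |st.2| ^ (p / 2) + |st.2| ^ p)))
    (sb : ℝ) :
    h sb 0 = (a ^ (1 - p') / p') * |sb| ^ p' := by
  have hp1 : 1 < p := by linarith
  have hpq : p.HolderConjugate p' := by
    rw [hp']; exact Real.HolderConjugate.conjExponent hp1
  have hppos : 0 < p := hpq.pos
  have hp'pos : 0 < p' := hpq.symm.pos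
  have hap : 0 < a / p := div_pos ha hppos
  have hinvp : p⁻¹ + p'⁻¹ = 1 := hpq.inv_add_inv_eq_one
  have hmul : (p - 1) * p' = p := hpq.sub_one_mul_conj
  set M : ℝ := (a ^ (1 - p') / p') * |sb| ^ p' with hMdef
  have hM2 : M = a ^ (1 - p') * |sb| ^ p' / p' := by rw [hMdef]; ring
  have key : ∀ st : ℝ × ℝ, st.1 * sb + st.2 * 0 -
      (a / p) * (|st.1| ^ p + 2 * b * |st.1| ^ (p / 2) * |st.2| ^ (p / 2) + |st.2| ^ p) ≤ M := by
    rintro ⟨s, t⟩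
    simp only [mul_zero, add_zero]
    have hB : 0 ≤ 2 * b * |s| ^ (p / 2) * |t| ^ (p / 2) := by positivity
    have hC : 0 ≤ |t| ^ p := Real.rpow_nonneg (abs_nonneg t) p
    have young : |s| * |sb| ≤ a * |s| ^ p / p + a ^ (1 - p') * |sb| ^ p' / p' := by
      have hx : (0:ℝ) ≤ a ^ (1/p) * |s| := by positivity
      have hy : (0:ℝ) ≤ a ^ (-(1/p)) * |sb| := by positivity
      have hY := Real.young_inequality_of_nonneg hx hy hpq
      have e1 : (a ^ (1/p) * |s|) * (a ^ (-(1/p)) * |sb|) = |s| * |sb| := by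
        have h1 : a ^ (1/p) * a ^ (-(1/p)) = 1 := by
          rw [← Real.rpow_add ha]; norm_num
        calc (a ^ (1/p) * |s|) * (a ^ (-(1/p)) * |sb|)
            = (a ^ (1/p) * a ^ (-(1/p))) * (|s| * |sb|) := by ring
          _ = |s| * |sb| := by rw [h1, one_mul]
      have e2 : (a ^ (1/p) * |s|) ^ p = a * |s| ^ p := by
        rw [Real.mul_rpow (Real.rpow_nonneg ha.le _) (abs_nonneg s),
          ← Real.rpow_mul ha.le, one_div_mul_cancel hppos.ne', Real.rpow_one]
      have e3 : (a ^ (-(1/p)) * |sb|) ^ p' = a ^ (1 - p') * |sb| ^ p' := by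
        rw [Real.mul_rpow (Real.rpow_nonneg ha.le _) (abs_nonneg sb),
          ← Real.rpow_mul ha.le]
        congr 2
        field_simp
        nlinarith [hmul]
      rw [e1, e2, e3] at hY
      exact hY
    have hs : s * sb ≤ |s| * |sb| := by
      calc s * sb ≤ |s * sb| := le_abs_self _
        _ = |s| * |sb| := abs_mul s sb
    have hmono : (a/p) * |s| ^ p ≤
        (a/p) * (|s| ^ p + 2 * b * |s| ^ (p / 2) * |t| ^ (p / 2) + |t| ^ p) :=
      mul_le_mul_of_nonneg_left (by linarith) hap.le
    have hd : a * |s| ^ p / p = (a/p) * |s| ^ p := by ring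
    linarith [young, hs, hmono, hM2.ge, hM2.le]
  have hbdd : BddAbove (Set.range fun st : ℝ × ℝ =>
      st.1 * sb + st.2 * 0 -
      (a / p) * (|st.1| ^ p + 2 * b * |st.1| ^ (p / 2) * |st.2| ^ (p / 2) + |st.2| ^ p)) := by
    refine ⟨M, ?_⟩
    rintro x ⟨st, rfl⟩
    exact key st
  have attained : ∃ st : ℝ × ℝ, M ≤ st.1 * sb + st.2 * 0 -
      (a / p) * (|st.1| ^ p + 2 * b * |st.1| ^ (p / 2) * |st.2| ^ (p / 2) + |st.2| ^ p) := by
    by_cases hsb : sb = 0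
    · refine ⟨(0, 0), ?_⟩
      have hpne : p ≠ 0 := hppos.ne'
      have hp2ne : p / 2 ≠ 0 := by positivity
      simp [hsb, hM2, Real.zero_rpow hpne, Real.zero_rpow hp2ne, Real.zero_rpow hp'pos.ne']
    · have habs : 0 < |sb| := abs_pos.mpr hsb
      set c : ℝ := |sb| / a with hc
      have hcpos : 0 < c := div_pos habs ha
      set r : ℝ := c ^ (p' - 1) with hr
      have hrpos : 0 < r := Real.rpow_pos_of_pos hcpos _
      refine ⟨(sb / |sb| * r, 0), ?_⟩
      have habs0 : |sb / |sb| * r| = r := by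
        rw [abs_mul, abs_div, abs_abs, div_self habs.ne', one_mul, abs_of_pos hrpos]
      have hs0sb : (sb / |sb| * r) * sb = |sb| * r := by
        have h2 : sb * sb = |sb| * |sb| := (abs_mul_abs_self sb).symm
        field_simp
        nlinarith [h2]
      have hpne : p ≠ 0 := hppos.ne'
      have hp2ne : p / 2 ≠ 0 := by positivity
      have hrp : r ^ p = |sb| ^ p' * a ^ (-p') := by
        rw [hr, ← Real.rpow_mul hcpos.le]
        have he : (p' - 1) * p = p' := by nlinarith [hmul]
        rw [he, hc, Real.div_rpow habs.le ha.le, Real.rpow_neg ha.le, div_eq_mul_inv]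
      have hsbr : |sb| * r = |sb| ^ p' * a ^ (1 - p') := by
        rw [hr, hc, Real.div_rpow habs.le ha.le]
        have h1 : |sb| * (|sb| ^ (p' - 1) / a ^ (p' - 1)) =
            (|sb| ^ (1:ℝ) * |sb| ^ (p' - 1)) / a ^ (p' - 1) := by
          rw [Real.rpow_one]; ring
        rw [h1, ← Real.rpow_add habs]
        rw [show (1:ℝ) + (p' - 1) = p' by ring,
          show (1 - p') = -(p' - 1) by ring, Real.rpow_neg ha.le, div_eq_mul_inv]
      have haa : a ^ (1 - p') = a * a ^ (-p') := by
        rw [show (1 - p') = 1 + (-p') by ring, Real.rpow_add ha, Real.rpow_one]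
      simp only [mul_zero, add_zero, abs_zero, Real.zero_rpow hpne, Real.zero_rpow hp2ne,
        mul_zero]
      rw [hs0sb, habs0, hrp, hsbr, hM2, haa]
      have goal_eq : |sb| ^ p' * (a * a ^ (-p')) - (a / p) * (|sb| ^ p' * a ^ (-p')) =
          a * a ^ (-p') * |sb| ^ p' / p' := by
        field_simp
        linear_combination hmul
      linarith [goal_eq]
  rw [hh]
  refine le_antisymm (ciSup_le key) ?_
  obtain ⟨st₀, hst₀⟩ := attained
  exact hst₀.trans (le_ciSup hbdd st₀)
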